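/- Let u : [t₀,∞) → ℝ be differentiable with u(t₀) ≥ 0, and suppose there are constants A ≥ 0, B > 0, C > 0 such that u'(t) ≤ (A − B·u(t))·u(t)/(C + u(t)) for all t ≥ t₀ with u(t) ≥ 0 for all t. Then limsup_{t→∞} u(t) ≤ A/B. -/

import Mathlib

open Filter

/-- Saturating-logistic differential inequality: if `u ≥ 0` and
`u' ≤ (A − B u) u/(C + u)`, then `limsup_{t→∞} u(t) ≤ A/B`. -/
theorem stmt_8 (u : ℝ → ℝ) (t₀ A B C : ℝ) (hA : 0 ≤ A) (hB : 0 < B)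
    (hC : 0 < C) (hu0 : 0 ≤ u t₀)
    (hdiff : ∀ t ≥ t₀, DifferentiableAt ℝ u t)
    (hnn : ∀ t ≥ t₀, 0 ≤ u t)
    (hineq : ∀ t ≥ t₀, deriv u t ≤ (A - B * u t) * u t / (C + u t)) :
    limsup u atTop ≤ A / B := by
  have hAB : 0 ≤ A / B := div_nonneg hA hB.le
  -- step 1: for every M > A/B, eventually u ≤ M
  have main : ∀ M, A / B < M → ∀ᶠ t in atTop, u t ≤ M := by
    intro M hM
    have hM0 : 0 < M := lt_of_le_of_lt hAB hM
    have hABM : A < B * M := (div_lt_iff₀' hB).mp hM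
    have hCM : (0:ℝ) < C + M := by linarith
    obtain ⟨δ, hδdef⟩ : ∃ δ : ℝ, δ = (B * M - A) * M / (C + M) := ⟨_, rfl⟩
    have hδ : 0 < δ := by
      rw [hδdef]; exact div_pos (by nlinarith) hCM
    -- derivative is ≤ -δ wherever u ≥ M
    have hder : ∀ t ≥ t₀, M ≤ u t → deriv u t ≤ -δ := by
      intro t ht hMu
      have hut : 0 < u t := lt_of_lt_of_le hM0 hMu
      have hCu : 0 < C + u t := by linarith
      have hstep : δ * (C + u t) ≤ (B * u t - A) * u t := by
        rw [hδdef, div_mul_eq_mul_div, div_le_iff₀ hCM]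
        nlinarith [mul_nonneg (sub_nonneg.mpr hMu) hC.le,
          mul_nonneg (sub_nonneg.mpr hMu) hM0.le,
          mul_nonneg (mul_nonneg (sub_nonneg.mpr hMu) hM0.le) hB.le,
          mul_nonneg (mul_nonneg (sub_nonneg.mpr hMu) hC.le) (sub_nonneg.mpr hABM.le),
          mul_nonneg (mul_nonneg (sub_nonneg.mpr hMu) hut.le) hB.le]
      have h2 : (A - B * u t) * u t / (C + u t) ≤ -δ := by
        rw [div_le_iff₀ hCu]; nlinarith
      linarith [hineq t ht]
    -- step 1a: there is t₁ ≥ t₀ with u t₁ ≤ M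
    have hex : ∃ t₁, t₁ ≥ t₀ ∧ u t₁ ≤ M := by
      by_contra hcon
      push_neg at hcon
      obtain ⟨T, hT⟩ : ∃ T : ℝ, T = t₀ + (u t₀ + 1) / δ := ⟨_, rfl⟩
      have hq : 0 ≤ (u t₀ + 1) / δ := div_nonneg (by linarith) hδ.le
      have hTt : t₀ ≤ T := by rw [hT]; linarith
      have hanti : AntitoneOn (fun t => u t + δ * t) (Set.Icc t₀ T) := by
        apply antitoneOn_of_deriv_nonpos (convex_Icc _ _)
        · intro x hx
          exact ((hdiff x hx.1).add
            ((differentiableAt_fun_id).const_mul δ)).continuousAt.continuousWithinAt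
        · intro x hx
          rw [interior_Icc] at hx
          exact ((hdiff x hx.1.le).add
            ((differentiableAt_fun_id).const_mul δ)).differentiableWithinAt
        · intro x hx
          rw [interior_Icc] at hx
          have hx0 : t₀ ≤ x := hx.1.le
          have hd : deriv (fun t => u t + δ * t) x = deriv u x + δ := by
            rw [deriv_fun_add (hdiff x hx0) ((differentiableAt_fun_id).const_mul δ),
              deriv_const_mul δ differentiableAt_fun_id, deriv_id'', mul_one]
          rw [hd]
          linarith [hder x hx0 (hcon x hx0).le]
      have h1 : u T + δ * T ≤ u t₀ + δ * t₀ :=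
        hanti (Set.left_mem_Icc.mpr hTt) (Set.right_mem_Icc.mpr hTt) hTt
      have h2 : δ * T = δ * t₀ + (u t₀ + 1) := by
        rw [hT]; field_simp
      have := hnn T hTt
      nlinarith
    obtain ⟨t₁, ht₁, hut₁⟩ := hex
    -- step 1b: forward invariance of {u ≤ M}
    rw [eventually_atTop]
    refine ⟨t₁, fun t ht => ?_⟩
    by_contra hlt
    push_neg at hlt
    have ht₁t : t₁ ≤ t := ht
    have hmem₁ : t₁ ∈ Set.Icc t₁ t ∩ u ⁻¹' Set.Iic M := ⟨Set.left_mem_Icc.mpr ht₁t, hut₁⟩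
    have hne : (Set.Icc t₁ t ∩ u ⁻¹' Set.Iic M).Nonempty := ⟨t₁, hmem₁⟩
    have hbdd : BddAbove (Set.Icc t₁ t ∩ u ⁻¹' Set.Iic M) := ⟨t, fun x hx => hx.1.2⟩
    have hScl : IsClosed (Set.Icc t₁ t ∩ u ⁻¹' Set.Iic M) := by
      have hco : ContinuousOn u (Set.Icc t₁ t) := fun x hx =>
        (hdiff x (le_trans ht₁ hx.1)).continuousAt.continuousWithinAt
      exact hco.preimage_isClosed_of_isClosed isClosed_Icc isClosed_Iic
    have hsmem : sSup (Set.Icc t₁ t ∩ u ⁻¹' Set.Iic M) ∈ Set.Icc t₁ t ∩ u ⁻¹' Set.Iic M :=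
      hScl.csSup_mem hne hbdd
    obtain ⟨s, hsdef⟩ : ∃ s : ℝ, s = sSup (Set.Icc t₁ t ∩ u ⁻¹' Set.Iic M) := ⟨_, rfl⟩
    rw [← hsdef] at hsmem
    have hst : s ≤ t := hsmem.1.2
    have hsu : u s ≤ M := hsmem.2
    have hst' : s < t := lt_of_le_of_ne hst (fun h => absurd (h ▸ hsu) (not_le.mpr hlt))
    have hs₀ : t₀ ≤ s := le_trans ht₁ hsmem.1.1
    have hgt : ∀ x, s < x → x ≤ t → M < u x := by
      intro x hsx hxt
      by_contra hle
      push_neg at hle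
      have hxmem : x ∈ Set.Icc t₁ t ∩ u ⁻¹' Set.Iic M :=
        ⟨⟨le_trans hsmem.1.1 hsx.le, hxt⟩, hle⟩
      have := le_csSup hbdd hxmem
      rw [← hsdef] at this
      exact absurd this (not_le.mpr hsx)
    have hanti : AntitoneOn u (Set.Icc s t) := by
      apply antitoneOn_of_deriv_nonpos (convex_Icc _ _)
      · exact fun x hx => (hdiff x (le_trans hs₀ hx.1)).continuousAt.continuousWithinAt
      · intro x hx
        rw [interior_Icc] at hx
        exact (hdiff x (le_trans hs₀ hx.1.le)).differentiableWithinAt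
      · intro x hx
        rw [interior_Icc] at hx
        have hx₀ : t₀ ≤ x := le_trans hs₀ hx.1.le
        have hMx : M < u x := hgt x hx.1 hx.2.le
        linarith [hder x hx₀ hMx.le]
    have : u t ≤ u s :=
      hanti (Set.left_mem_Icc.mpr hst) (Set.right_mem_Icc.mpr hst) hst
    linarith
  -- step 2: conclude about limsup
  have hcob : IsCoboundedUnder (· ≤ ·) atTop u := by
    apply isCoboundedUnder_le_of_eventually_le (x := 0) atTop
    filter_upwards [eventually_ge_atTop t₀] with t ht using hnn t ht
  refine le_of_forall_pos_le_add fun ε hε => ?_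
  exact limsup_le_of_le hcob (main (A / B + ε) (by linarith))
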